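/- Let P be a polynomial with P'(z) = ∏_{i=1}^k (z - cᵢ) where c₁,…,c_k are distinct. Then the Schwarzian derivative of P satisfies S_P(z) = -(3/2) Σᵢ (Aᵢ(z-cᵢ)+1)/(z-cᵢ)² where Aᵢ = (2/3) Σ_{j≠i} 1/(cᵢ - cⱼ). -/

import Mathlib

open Finset

noncomputable def schwarzian (f : ℂ → ℂ) (z : ℂ) : ℂ :=
  deriv (deriv (deriv f)) z / deriv f z - (3 / 2) * (deriv (deriv f) z / deriv f z) ^ 2

open Polynomial in
lemma derivative_prod_X_sub_C {k : ℕ} (c : Fin k → ℂ) (s : Finset (Fin k)) :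
    Polynomial.derivative (∏ i ∈ s, (X - C (c i))) =
      ∑ i ∈ s, ∏ j ∈ s.erase i, (X - C (c j)) := by
  rw [Finset.prod_eq_multiset_prod, Polynomial.derivative_prod, Finset.sum_eq_multiset_sum]
  congr 1
  apply Multiset.map_congr rfl
  intro i hi
  rw [Finset.prod_eq_multiset_prod, Finset.erase_val]
  simp

/-- If `P` is a polynomial with `P'(z) = ∏ᵢ (z - cᵢ)`, the `cᵢ` distinct, then
`S_P(z) = -(3/2) Σᵢ (Aᵢ(z-cᵢ)+1)/(z-cᵢ)²` with `Aᵢ = (2/3) Σ_{j≠i} 1/(cᵢ-cⱼ)`. -/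
theorem schwarzian_of_polynomial (k : ℕ) (c : Fin k → ℂ) (hc : Function.Injective c)
    (P : Polynomial ℂ) (hP : P.derivative = ∏ i, (Polynomial.X - Polynomial.C (c i)))
    (z : ℂ) (hz : ∀ i, z ≠ c i) :
    schwarzian (fun w => P.eval w) z =
      -(3 / 2) * ∑ i, (((2 / 3) * ∑ j ∈ univ.erase i, 1 / (c i - c j)) * (z - c i) + 1)
        / (z - c i) ^ 2 := by
  classical
  have hzc : ∀ i, z - c i ≠ 0 := fun i => sub_ne_zero.mpr (hz i)
  -- derivatives of eval
  have hd1 : deriv (fun w => P.eval w) = fun w => (Polynomial.derivative P).eval w :=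
    funext fun w => Polynomial.deriv P
  have hd2 : deriv (deriv (fun w => P.eval w)) =
      fun w => (Polynomial.derivative (Polynomial.derivative P)).eval w := by
    rw [hd1]; exact funext fun w => Polynomial.deriv _
  have hd3 : deriv (deriv (deriv (fun w => P.eval w))) z =
      (Polynomial.derivative (Polynomial.derivative (Polynomial.derivative P))).eval z := by
    rw [hd2]; exact Polynomial.deriv _
  -- the polynomial derivatives
  have hP2 : Polynomial.derivative (Polynomial.derivative P) =
      ∑ i, ∏ j ∈ univ.erase i, (Polynomial.X - Polynomial.C (c j)) := by
    rw [hP, derivative_prod_X_sub_C]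
  have hP3 : Polynomial.derivative (Polynomial.derivative (Polynomial.derivative P)) =
      ∑ i, ∑ j ∈ univ.erase i, ∏ l ∈ (univ.erase i).erase j,
        (Polynomial.X - Polynomial.C (c l)) := by
    rw [hP2, map_sum]
    exact Finset.sum_congr rfl fun i _ => derivative_prod_X_sub_C c _
  set Qz : ℂ := ∏ i, (z - c i) with hQzdef
  have hQz : Qz ≠ 0 := Finset.prod_ne_zero_iff.mpr fun i _ => hzc i
  -- evaluations of erased products
  have hprod1 : ∀ i : Fin k, ∏ j ∈ univ.erase i, (z - c j) = Qz * (z - c i)⁻¹ := by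
    intro i
    have h : (z - c i) * ∏ j ∈ univ.erase i, (z - c j) = Qz :=
      Finset.mul_prod_erase univ (fun j => z - c j) (Finset.mem_univ i)
    rw [← h, mul_comm (z - c i), mul_assoc, mul_inv_cancel₀ (hzc i), mul_one]
  have hprod2 : ∀ i : Fin k, ∀ j ∈ univ.erase i,
      ∏ l ∈ (univ.erase i).erase j, (z - c l) = Qz * ((z - c i)⁻¹ * (z - c j)⁻¹) := by
    intro i j hj
    have h : (z - c j) * ∏ l ∈ (univ.erase i).erase j, (z - c l)
        = ∏ l ∈ univ.erase i, (z - c l) :=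
      Finset.mul_prod_erase (univ.erase i) (fun l => z - c l) hj
    rw [hprod1 i] at h
    apply mul_left_cancel₀ (hzc j)
    rw [h, show (z - c j) * (Qz * ((z - c i)⁻¹ * (z - c j)⁻¹))
        = ((z - c j) * (z - c j)⁻¹) * (Qz * (z - c i)⁻¹) by ring,
      mul_inv_cancel₀ (hzc j), one_mul]
  -- eval values
  have hE1 : (Polynomial.derivative P).eval z = Qz := by
    simp [hP, Polynomial.eval_prod, hQzdef]
  have hE2 : (Polynomial.derivative (Polynomial.derivative P)).eval z
      = Qz * ∑ i, (z - c i)⁻¹ := by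
    rw [hP2]
    simp only [Polynomial.eval_finset_sum, Polynomial.eval_prod, Polynomial.eval_sub,
      Polynomial.eval_X, Polynomial.eval_C]
    rw [Finset.mul_sum]
    exact Finset.sum_congr rfl fun i _ => hprod1 i
  have hE3 : (Polynomial.derivative (Polynomial.derivative (Polynomial.derivative P))).eval z =
      Qz * ∑ i, ∑ j ∈ univ.erase i, (z - c i)⁻¹ * (z - c j)⁻¹ := by
    rw [hP3]
    simp only [Polynomial.eval_finset_sum, Polynomial.eval_prod, Polynomial.eval_sub,
      Polynomial.eval_X, Polynomial.eval_C]
    rw [Finset.mul_sum]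
    refine Finset.sum_congr rfl fun i _ => ?_
    rw [Finset.mul_sum]
    exact Finset.sum_congr rfl fun j hj => hprod2 i j hj
  -- reduce schwarzian to sums
  set S1 : ℂ := ∑ i, (z - c i)⁻¹ with hS1
  set S2 : ℂ := ∑ i, ∑ j ∈ univ.erase i, (z - c i)⁻¹ * (z - c j)⁻¹ with hS2
  have hsch : schwarzian (fun w => P.eval w) z = S2 - (3 / 2) * S1 ^ 2 := by
    have hform : schwarzian (fun w => P.eval w) z =
        ((Polynomial.derivative (Polynomial.derivative (Polynomial.derivative P))).eval z)
            / ((Polynomial.derivative P).eval z)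
          - (3 / 2) * (((Polynomial.derivative (Polynomial.derivative P)).eval z)
            / ((Polynomial.derivative P).eval z)) ^ 2 := by
      unfold schwarzian
      rw [hd3, hd2, hd1]
    rw [hform, hE1, hE2, hE3, mul_div_cancel_left₀ _ hQz, mul_div_cancel_left₀ _ hQz]
  rw [hsch]
  -- square of S1
  have hsq : S1 ^ 2 = (∑ i, ((z - c i)⁻¹) ^ 2) + S2 := by
    rw [hS1, hS2, sq, Finset.sum_mul_sum]
    rw [← Finset.sum_add_distrib]
    refine Finset.sum_congr rfl fun i _ => ?_
    rw [← Finset.add_sum_erase univ (fun j => (z - c i)⁻¹ * (z - c j)⁻¹) (Finset.mem_univ i), sq]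
  -- symmetrization
  set T : ℂ := ∑ i, ∑ j ∈ univ.erase i, (c i - c j)⁻¹ * (z - c i)⁻¹ with hT
  have hS2T : S2 = 2 * T := by
    have hswap : (∑ i, ∑ j ∈ univ.erase i, (c j - c i)⁻¹ * (z - c j)⁻¹) = T := by
      rw [hT]
      exact Finset.sum_comm' (by intro x y; simp [Finset.mem_erase, ne_comm, and_comm])
        (f := fun i j => (c j - c i)⁻¹ * (z - c j)⁻¹)
    have hterm : ∀ i : Fin k, ∀ j ∈ univ.erase i,
        (z - c i)⁻¹ * (z - c j)⁻¹
          = (c i - c j)⁻¹ * (z - c i)⁻¹ + (c j - c i)⁻¹ * (z - c j)⁻¹ := by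
      intro i j hj
      have hij : c i ≠ c j := fun h => (Finset.mem_erase.mp hj).1 (hc h.symm)
      have h1 : c i - c j ≠ 0 := sub_ne_zero.mpr hij
      have h2 : c j - c i ≠ 0 := sub_ne_zero.mpr hij.symm
      have hi := hzc i
      have hjz := hzc j
      field_simp
      ring
    calc S2 = ∑ i, ∑ j ∈ univ.erase i,
          ((c i - c j)⁻¹ * (z - c i)⁻¹ + (c j - c i)⁻¹ * (z - c j)⁻¹) := by
          rw [hS2]
          exact Finset.sum_congr rfl fun i _ => Finset.sum_congr rfl (hterm i)
      _ = T + ∑ i, ∑ j ∈ univ.erase i, (c j - c i)⁻¹ * (z - c j)⁻¹ := by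
          simp only [Finset.sum_add_distrib, hT]
      _ = 2 * T := by rw [hswap]; ring
  -- rewrite RHS termwise and conclude
  have hrhs : ∀ i : Fin k,
      (((2 / 3) * ∑ j ∈ univ.erase i, 1 / (c i - c j)) * (z - c i) + 1) / (z - c i) ^ 2
        = (2 / 3) * (∑ j ∈ univ.erase i, (c i - c j)⁻¹ * (z - c i)⁻¹) + ((z - c i)⁻¹) ^ 2 := by
    intro i
    have hi := hzc i
    rw [← Finset.sum_mul]
    simp only [one_div]
    field_simp
  have hsum : ∑ i, (((2 / 3) * ∑ j ∈ univ.erase i, 1 / (c i - c j)) * (z - c i) + 1)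
        / (z - c i) ^ 2 = (2 / 3) * T + ∑ i, ((z - c i)⁻¹) ^ 2 := by
    rw [Finset.sum_congr rfl (fun i _ => hrhs i), Finset.sum_add_distrib, hT, Finset.mul_sum]
  rw [hsum, hsq, hS2T]
  ring
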